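/- (The conservative rank envelope test rejects only if the rank count test rejects.) It holds that #{i ∈ {1, …, s+1} : N_i ≼ N_1} ≤ #{i ∈ {1, …, s+1} : R_i ≤ R_1}, where N_i ≼ N_1 means ¬(N_1 ≺ N_i). Consequently, for any integer m, if #{i : R_i ≤ R_1} ≤ m (the conservative rank envelope test at level m/(s+1) rejects) then #{i : N_i ≼ N_1} ≤ m (the rank count test rejects). -/
import Mathlib


open Finset

/-- The upward pointwise rank `R_i^↑(r) = #{j : T_j(r) ≤ T_i(r)}`. -/
noncomputable def upRank {s : ℕ} {ι : Type*} (T : Fin (s + 1) → ι → ℝ) (i : Fin (s + 1)) (r : ι) : ℕ :=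
  {j : Fin (s + 1) | T j r ≤ T i r}.ncard

/-- The downward pointwise rank `R_i^↓(r) = #{j : T_j(r) ≥ T_i(r)}`. -/
noncomputable def downRank {s : ℕ} {ι : Type*} (T : Fin (s + 1) → ι → ℝ) (i : Fin (s + 1)) (r : ι) : ℕ :=
  {j : Fin (s + 1) | T i r ≤ T j r}.ncard

/-- The two-sided pointwise rank `R_i^*(r) = min(R_i^↑(r), R_i^↓(r))`. -/
noncomputable def twoSidedRank {s : ℕ} {ι : Type*} (T : Fin (s + 1) → ι → ℝ) (i : Fin (s + 1)) (r : ι) : ℕ :=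
  min (upRank T i r) (downRank T i r)

/-- The extreme rank `R_i = min_{r ∈ I} R_i^*(r)`. -/
noncomputable def extremeRank {s : ℕ} {ι : Type*} [Fintype ι] [Nonempty ι]
    (T : Fin (s + 1) → ι → ℝ) (i : Fin (s + 1)) : ℕ :=
  univ.inf' univ_nonempty (fun r => twoSidedRank T i r)

/-- The rank count `N_{i,k} = #{r ∈ I : R_i^*(r) = k}`. -/
noncomputable def rankCount {s : ℕ} {ι : Type*} [Fintype ι]
    (T : Fin (s + 1) → ι → ℝ) (i : Fin (s + 1)) (k : ℕ) : ℕ :=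
  {r : ι | twoSidedRank T i r = k}.ncard

/-- The reverse lexical strict order on rank count vectors
`N_i = (N_{i,1}, …, N_{i,K})`, `K = ⌊(s+2)/2⌋`: `N_i ≺ N_j` iff there exists `n ≤ K`
with `N_{i,k} = N_{j,k}` for all `k < n` and `N_{i,n} > N_{j,n}`. -/
def rankCountLT {s : ℕ} {ι : Type*} [Fintype ι]
    (T : Fin (s + 1) → ι → ℝ) (i j : Fin (s + 1)) : Prop :=
  ∃ n : ℕ, 1 ≤ n ∧ n ≤ (s + 2) / 2 ∧
    (∀ k, 1 ≤ k → k < n → rankCount T i k = rankCount T j k) ∧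
    rankCount T j n < rankCount T i n

lemma twoSidedRank_pos {s : ℕ} {ι : Type*} (T : Fin (s + 1) → ι → ℝ)
    (i : Fin (s + 1)) (r : ι) : 1 ≤ twoSidedRank T i r := by
  unfold twoSidedRank upRank downRank
  rw [Nat.one_le_iff_ne_zero, Ne, Nat.min_eq_zero_iff]
  push_neg
  constructor <;>
  · rw [← Nat.pos_iff_ne_zero, Set.ncard_pos (Set.toFinite _)]
    exact ⟨i, by simp⟩

lemma twoSidedRank_le {s : ℕ} {ι : Type*} (T : Fin (s + 1) → ι → ℝ)
    (i : Fin (s + 1)) (r : ι)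
    (hnoties : ∀ i j : Fin (s + 1), i ≠ j → T i r ≠ T j r) :
    twoSidedRank T i r ≤ (s + 2) / 2 := by
  have hsum : upRank T i r + downRank T i r = s + 2 := by
    unfold upRank downRank
    have h := Set.ncard_union_add_ncard_inter {j : Fin (s + 1) | T j r ≤ T i r}
      {j : Fin (s + 1) | T i r ≤ T j r} (Set.toFinite _) (Set.toFinite _)
    have hu : {j : Fin (s + 1) | T j r ≤ T i r} ∪ {j | T i r ≤ T j r} = Set.univ := by
      ext j; simpa using le_total (T j r) (T i r)
    have hi : {j : Fin (s + 1) | T j r ≤ T i r} ∩ {j | T i r ≤ T j r} = {i} := by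
      ext j
      simp only [Set.mem_inter_iff, Set.mem_setOf_eq, Set.mem_singleton_iff]
      constructor
      · rintro ⟨h1, h2⟩
        by_contra hne
        exact hnoties i j (Ne.symm hne) (le_antisymm h2 h1)
      · rintro rfl; simp
    rw [hu, hi, Set.ncard_univ, Set.ncard_singleton] at h
    simp [Nat.card_eq_fintype_card] at h
    omega
  rw [Nat.le_div_iff_mul_le (by norm_num)]
  unfold twoSidedRank
  omega

lemma extremeRank_le {s : ℕ} {ι : Type*} [Fintype ι] [Nonempty ι]
    (T : Fin (s + 1) → ι → ℝ) (i : Fin (s + 1)) (r : ι) :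
    extremeRank T i ≤ twoSidedRank T i r :=
  Finset.inf'_le _ (mem_univ r)

lemma exists_extremeRank {s : ℕ} {ι : Type*} [Fintype ι] [Nonempty ι]
    (T : Fin (s + 1) → ι → ℝ) (i : Fin (s + 1)) :
    ∃ r : ι, extremeRank T i = twoSidedRank T i r :=
  Finset.exists_mem_eq_inf' univ_nonempty _ |>.imp fun _ h => h.2

lemma rankCount_eq_zero {s : ℕ} {ι : Type*} [Fintype ι] [Nonempty ι]
    (T : Fin (s + 1) → ι → ℝ) (i : Fin (s + 1)) {k : ℕ}
    (hk : k < extremeRank T i) : rankCount T i k = 0 := by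
  unfold rankCount
  rw [Set.ncard_eq_zero (Set.toFinite _)]
  ext r
  simp only [Set.mem_setOf_eq, Set.mem_empty_iff_false, iff_false]
  intro h
  exact absurd (extremeRank_le T i r) (by omega)

lemma rankCount_extreme_pos {s : ℕ} {ι : Type*} [Fintype ι] [Nonempty ι]
    (T : Fin (s + 1) → ι → ℝ) (i : Fin (s + 1)) :
    1 ≤ rankCount T i (extremeRank T i) := by
  obtain ⟨r, hr⟩ := exists_extremeRank T i
  rw [Nat.one_le_iff_ne_zero, ← Nat.pos_iff_ne_zero]
  rw [rankCount, Set.ncard_pos (Set.toFinite _)]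
  exact ⟨r, hr.symm⟩

/-- **The conservative rank envelope test rejects only if the rank count test
rejects.** It holds that `#{i : N_i ≼ N_1} ≤ #{i : R_i ≤ R_1}`, where `N_i ≼ N_1` means
`¬(N_1 ≺ N_i)`. Consequently, for any integer `m`, if `#{i : R_i ≤ R_1} ≤ m` (the
conservative rank envelope test at level `m/(s+1)` rejects), then `#{i : N_i ≼ N_1} ≤ m`
(the rank count test rejects). -/
theorem conservative_envelope_imp_rankCount_test
    {s : ℕ} (hs : 1 ≤ s) {ι : Type*} [Fintype ι] [Nonempty ι]
    (T : Fin (s + 1) → ι → ℝ)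
    (hnoties : ∀ r : ι, ∀ i j : Fin (s + 1), i ≠ j → T i r ≠ T j r) :
    {i : Fin (s + 1) | ¬ rankCountLT T 0 i}.ncard ≤
        {i : Fin (s + 1) | extremeRank T i ≤ extremeRank T 0}.ncard ∧
      ∀ m : ℕ, {i : Fin (s + 1) | extremeRank T i ≤ extremeRank T 0}.ncard ≤ m →
        {i : Fin (s + 1) | ¬ rankCountLT T 0 i}.ncard ≤ m := by
  have hsub : {i : Fin (s + 1) | ¬ rankCountLT T 0 i} ⊆
      {i : Fin (s + 1) | extremeRank T i ≤ extremeRank T 0} := by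
    intro i hi
    simp only [Set.mem_setOf_eq] at hi ⊢
    by_contra hlt
    push_neg at hlt
    apply hi
    refine ⟨extremeRank T 0, ?_, ?_, ?_, ?_⟩
    · obtain ⟨r, hr⟩ := exists_extremeRank T 0
      rw [hr]; exact twoSidedRank_pos T 0 r
    · obtain ⟨r⟩ := ‹Nonempty ι›
      exact le_trans (extremeRank_le T 0 r)
        (twoSidedRank_le T 0 r (fun a b => hnoties r a b))
    · intro k hk1 hk2
      rw [rankCount_eq_zero T 0 hk2, rankCount_eq_zero T i (by omega)]
    · rw [rankCount_eq_zero T i hlt]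
      exact rankCount_extreme_pos T 0
  have h1 : {i : Fin (s + 1) | ¬ rankCountLT T 0 i}.ncard ≤
      {i : Fin (s + 1) | extremeRank T i ≤ extremeRank T 0}.ncard :=
    Set.ncard_le_ncard hsub (Set.toFinite _)
  exact ⟨h1, fun m hm => le_trans h1 hm⟩
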